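/- arXiv:1711.03973 — 11 statements merged into one kernel-verified Lean document; each statement's English description precedes it below -/
import Mathlib

section
/- If a sequence x : ℤ → ℝ satisfies the discrete equation -x(i-1) + 2x(i) - x(i+1) = sgn(x(i)) for all i, and x(k) = 0 for some k, then for all n ≥ 1 we have x(k-n) + x(k+n) = 0. -/
/-- If `x : ℤ → ℝ` satisfies `-x(i-1) + 2x(i) - x(i+1) = sgn(x(i))` for all `i`,
and `x k = 0`, then `x(k-n) + x(k+n) = 0` for all `n ≥ 1`. -/
theorem stmt_0 (x : ℤ → ℝ)
    (hrec : ∀ i : ℤ, -x (i - 1) + 2 * x i - x (i + 1) = Real.sign (x i))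
    (k : ℤ) (hk : x k = 0) :
    ∀ n : ℤ, 1 ≤ n → x (k - n) + x (k + n) = 0 := by
  have H : ∀ m : ℕ, x (k - m) + x (k + m) = 0 ∧ x (k - (m + 1)) + x (k + (m + 1)) = 0 := by
    intro m
    induction m with
    | zero =>
      constructor
      · simpa using by linarith [hk]
      · have h := hrec k
        rw [hk, Real.sign_zero] at h
        push_cast
        linarith
    | succ m ih =>
      obtain ⟨h1, h2⟩ := ih
      refine ⟨by push_cast at h2 ⊢; linarith, ?_⟩
      have ha := hrec (k + (m + 1))
      have hb := hrec (k - (m + 1))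
      have hsym : x (k - ((m : ℤ) + 1)) = -x (k + ((m : ℤ) + 1)) := by
        linarith
      rw [hsym, Real.sign_neg] at hb
      push_cast at h1 h2 ha hb ⊢
      have e1 : k + ((m : ℤ) + 1) - 1 = k + m := by ring
      have e2 : k + ((m : ℤ) + 1) + 1 = k + ((m : ℤ) + 1 + 1) := by ring
      have e3 : k - ((m : ℤ) + 1) - 1 = k - ((m : ℤ) + 1 + 1) := by ring
      have e4 : k - ((m : ℤ) + 1) + 1 = k - m := by ring
      rw [e1, e2] at ha
      rw [e3, e4] at hb
      linarith
  intro n hn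
  lift n to ℕ using le_trans zero_le_one hn
  exact (H n).1
end

section
/- If a sequence x : ℤ → ℝ satisfies -x(i-1) + 2x(i) - x(i+1) = sgn(x(i)) for all i, and x(0) = 0 and x(k) = 0 for some positive integer k, then the sequence is periodic with period 2k, i.e., x(i + 2k) = x(i) for all i. -/
/-- If `x` satisfies the recurrence and vanishes at `c`, then `x` is anti-symmetric about `c`. -/
lemma aux_anti (x : ℤ → ℝ)
    (hrec : ∀ i : ℤ, -x (i - 1) + 2 * x i - x (i + 1) = Real.sign (x i))
    (c : ℤ) (hc : x c = 0) : ∀ i : ℤ, x (c + i) = -x (c - i) := by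
  have key : ∀ n : ℕ, x (c + n) = -x (c - n) ∧ x (c + (n + 1)) = -x (c - (n + 1)) := by
    intro n
    induction n with
    | zero =>
      constructor
      · simp [hc]
      · have h := hrec c
        rw [hc] at h
        simp [Real.sign_zero] at h
        push_cast
        linarith
    | succ n ih =>
      obtain ⟨h1, h2⟩ := ih
      refine ⟨by push_cast; exact h2, ?_⟩
      have hA := hrec (c + (n + 1))
      have hB := hrec (c - (n + 1))
      have e1 : (c : ℤ) + (n + 1) - 1 = c + n := by ring
      have e2 : (c : ℤ) + (n + 1) + 1 = c + (n + 1 + 1) := by push_cast; ring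
      have e3 : (c : ℤ) - (n + 1) - 1 = c - (n + 1 + 1) := by push_cast; ring
      have e4 : (c : ℤ) - (n + 1) + 1 = c - n := by ring
      rw [e1, e2] at hA
      rw [e3, e4] at hB
      rw [h1, h2] at hA
      rw [Real.sign_neg] at hA
      push_cast
      linarith
  intro i
  rcases le_or_gt 0 i with hi | hi
  · obtain ⟨n, rfl⟩ := Int.eq_ofNat_of_zero_le hi
    exact (key n).1
  · obtain ⟨n, rfl⟩ : ∃ n : ℕ, i = -(n : ℤ) := by
      refine ⟨i.natAbs, ?_⟩
      omega
    have := (key n).1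
    have e : c + -(n : ℤ) = c - n := by ring
    have e' : c - -(n : ℤ) = c + n := by ring
    rw [e, e', this]
    ring

/-- If `x : ℤ → ℝ` satisfies the discrete equation and vanishes at `0` and at `k > 0`,
then `x` is periodic with period `2k`. -/
theorem stmt_1 (x : ℤ → ℝ)
    (hrec : ∀ i : ℤ, -x (i - 1) + 2 * x i - x (i + 1) = Real.sign (x i))
    (k : ℤ) (hkpos : 0 < k) (h0 : x 0 = 0) (hk : x k = 0) :
    ∀ i : ℤ, x (i + 2 * k) = x i := by
  have A := aux_anti x hrec 0 h0
  have B := aux_anti x hrec k hk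
  intro i
  have hB := B (k + i)
  have e1 : k + (k + i) = i + 2 * k := by ring
  have e2 : k - (k + i) = -i := by ring
  rw [e1, e2] at hB
  have hA := A i
  have e3 : (0 : ℤ) + i = i := by ring
  have e4 : (0 : ℤ) - i = -i := by ring
  rw [e3, e4] at hA
  rw [hB, hA]
end

section
/- Let (p, x) : ℕ → ℝ × ℝ evolve by p(i+1) = p(i) - sgn(x(i)), x(i+1) = x(i) + p(i) - sgn(x(i)). If the orbit is periodic with period k ≥ 1, i.e., x(k+1) = x(1) and p(k+1) = p(1), then k·p(1) is an integer; in particular p(1) is rational. -/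
/-- If the orbit of the dynamical system is periodic with period `k ≥ 1`, then `k * p 1`
is an integer; in particular `p 1` is rational. -/
theorem stmt_3 (p x : ℕ → ℝ) (k : ℕ) (hk : 1 ≤ k)
    (hp : ∀ i, 1 ≤ i → p (i + 1) = p i - Real.sign (x i))
    (hx : ∀ i, 1 ≤ i → x (i + 1) = x i + p i - Real.sign (x i))
    (hxper : x (k + 1) = x 1) (hpper : p (k + 1) = p 1) :
    (∃ m : ℤ, (k : ℝ) * p 1 = m) ∧ ∃ q : ℚ, p 1 = q := by
  -- integer version of sign
  set s : ℕ → ℤ := fun j => if 0 < x j then 1 else if x j < 0 then -1 else 0 with hs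
  have hsgn : ∀ j, Real.sign (x j) = (s j : ℝ) := by
    intro j
    rcases lt_trichotomy (x j) 0 with h | h | h
    · simp [hs, Real.sign_of_neg h, h, not_lt.mpr h.le]
    · simp [hs, h, Real.sign_zero]
    · simp [hs, Real.sign_of_pos h, h, not_lt.mpr h.le]
  -- p (i+1) = p 1 - sum of signs
  have hA : ∀ i, 1 ≤ i → p (i + 1) = p 1 - (∑ j ∈ Finset.Icc 1 i, (s j : ℝ)) := by
    intro i hi
    induction i with
    | zero => omega
    | succ n ih =>
      rcases Nat.eq_or_lt_of_le hi with h | h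
      · have : n = 0 := by omega
        subst this
        simp [hp 1 le_rfl, hsgn]
      · have hn : 1 ≤ n := by omega
        rw [hp (n + 1) (by omega), ih hn, Finset.sum_Icc_succ_top (by omega : 1 ≤ n + 1),
          hsgn]
        ring
  -- x (i+1) = x 1 + sum of p (j+1)
  have hB : ∀ i, 1 ≤ i → x (i + 1) = x 1 + (∑ j ∈ Finset.Icc 1 i, p (j + 1)) := by
    intro i hi
    induction i with
    | zero => omega
    | succ n ih =>
      rcases Nat.eq_or_lt_of_le hi with h | h
      · have : n = 0 := by omega
        subst this
        simp [hx 1 le_rfl, hp 1 le_rfl]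
        ring
      · have hn : 1 ≤ n := by omega
        have h1 := hx (n + 1) (by omega)
        have h2 := hp (n + 1) (by omega)
        have h3 := ih hn
        rw [Finset.sum_Icc_succ_top (by omega : 1 ≤ n + 1)]
        linarith
  have hsum : (∑ j ∈ Finset.Icc 1 k, p (j + 1)) = 0 := by
    have := hB k hk
    rw [hxper] at this
    linarith
  have hkey : (k : ℝ) * p 1 = ∑ j ∈ Finset.Icc 1 k, (∑ l ∈ Finset.Icc 1 j, (s l : ℝ)) := by
    have : ∑ j ∈ Finset.Icc 1 k, p (j + 1)
        = ∑ j ∈ Finset.Icc 1 k, (p 1 - ∑ l ∈ Finset.Icc 1 j, (s l : ℝ)) := by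
      apply Finset.sum_congr rfl
      intro j hj
      exact hA j (Finset.mem_Icc.mp hj).1
    rw [this, Finset.sum_sub_distrib, Finset.sum_const, Nat.card_Icc] at hsum
    simp at hsum
    linarith [hsum]
  refine ⟨⟨∑ j ∈ Finset.Icc 1 k, (∑ l ∈ Finset.Icc 1 j, s l), by rw [hkey]; push_cast; ring⟩, ?_⟩
  obtain ⟨m, hm⟩ : ∃ m : ℤ, (k : ℝ) * p 1 = m :=
    ⟨∑ j ∈ Finset.Icc 1 k, (∑ l ∈ Finset.Icc 1 j, s l), by rw [hkey]; push_cast; ring⟩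
  refine ⟨(m : ℚ) / k, ?_⟩
  have hk0 : (k : ℝ) ≠ 0 := by positivity
  push_cast
  field_simp
  linarith [hm]
end

section
/- Suppose the sequence x : ℕ → ℝ satisfies x(j+1) = x(1) + j·P - j(j+1)/2 for 1 ≤ j+1 ≤ j_flip, where P > 0 and x(1) > 0. Then the smallest integer j with x(j+1) < 0 is j_flip = ⌈(P - 1/2) + √((P - 1/2)² + 2x(1))⌉, provided (P - 1/2) + √((P - 1/2)² + 2x(1)) is not an integer. -/
lemma stmt6_aux1 (a s t x1 p : ℝ) (hp : p = a + 1/2) (hs2 : s^2 = a^2 + 2*x1)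
    (hs0 : 0 ≤ s) (h : a + s < t) : x1 + t * p - t * (t + 1) / 2 < 0 := by
  subst hp
  nlinarith [mul_pos (by linarith : (0:ℝ) < t - a - s) (by linarith : (0:ℝ) < t - a + s)]

lemma stmt6_aux2 (a s t x1 p : ℝ) (hp : p = a + 1/2) (hs2 : s^2 = a^2 + 2*x1)
    (hsa : a < s) (h0 : 0 ≤ t) (h : t < a + s) : 0 ≤ x1 + t * p - t * (t + 1) / 2 := by
  subst hp
  nlinarith [mul_pos (by linarith : (0:ℝ) < s - (t - a)) (by linarith : (0:ℝ) < s + (t - a))]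

/-- For `x(j+1) = x(1) + jP - j(j+1)/2` with `P > 0`, `x(1) > 0`, the smallest
nonnegative integer `j` with `x(j+1) < 0` is
`j_flip = ⌈(P - 1/2) + √((P - 1/2)² + 2 x(1))⌉`, provided this quantity is not an
integer. -/
theorem stmt_6 (P x1 : ℝ) (hP : 0 < P) (hx1 : 0 < x1)
    (hnint : ¬ ∃ m : ℤ, (P - 1/2) + Real.sqrt ((P - 1/2)^2 + 2 * x1) = m) :
    let jflip : ℤ := ⌈(P - 1/2) + Real.sqrt ((P - 1/2)^2 + 2 * x1)⌉
    (x1 + jflip * P - jflip * (jflip + 1) / 2 < 0) ∧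
      ∀ j : ℤ, 0 ≤ j → j < jflip → ¬ (x1 + j * P - j * (j + 1) / 2 < 0) := by
  intro jflip
  have hD : (0:ℝ) ≤ (P - 1/2)^2 + 2*x1 := by positivity
  have hs2 : (Real.sqrt ((P - 1/2)^2 + 2*x1))^2 = (P - 1/2)^2 + 2*x1 := Real.sq_sqrt hD
  set s : ℝ := Real.sqrt ((P - 1/2)^2 + 2*x1) with hsdef
  have hs0 : 0 ≤ s := Real.sqrt_nonneg _
  have hsa : P - 1/2 < s := by nlinarith [mul_nonneg hs0 hs0]
  have hjf : (P - 1/2) + s ≤ (jflip : ℝ) := Int.le_ceil _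
  have hne : (jflip : ℝ) ≠ (P - 1/2) + s := fun h => hnint ⟨jflip, h.symm⟩
  have hlt : (P - 1/2) + s < (jflip : ℝ) := lt_of_le_of_ne hjf (Ne.symm hne)
  constructor
  · exact stmt6_aux1 (P - 1/2) s (jflip : ℝ) x1 P (by ring) hs2 hs0 hlt
  · intro j hj0 hjlt hneg
    have hle : (j : ℝ) + 1 ≤ (jflip : ℝ) := by exact_mod_cast hjlt
    have hceil : (jflip : ℝ) < (P - 1/2) + s + 1 := Int.ceil_lt_add_one _
    have hjr : (j : ℝ) < (P - 1/2) + s := by linarith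
    have hj0' : (0:ℝ) ≤ (j : ℝ) := by exact_mod_cast hj0
    have := stmt6_aux2 (P - 1/2) s (j : ℝ) x1 P (by ring) hs2 hsa hj0' hjr
    linarith
end

section
/- Define the leading iteration Δ_L(m+1) = Δ_L(m) + 1 + 2p - 2⌈Δ_L(m)⌉ for a fixed rational p. Then for all m and n ≥ 0, Δ_L(m + 2n) = Δ_L(m) + 4np + 2·Σ_{l=0}^{2n-1} (-1)^l ⌈Δ_L(m) + 2lp⌉. -/
noncomputable def Jaux (p : ℚ) (Δ : ℕ → ℝ) (m : ℕ) : ℕ → ℤ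
  | 0 => 0
  | k + 1 => -Jaux p Δ m k + 1 - 2 * ⌈Δ m + 2 * (k : ℝ) * (p : ℝ)⌉

lemma Jaux_A (p : ℚ) (Δ : ℕ → ℝ)
    (hrec : ∀ m, Δ (m + 1) = Δ m + 1 + 2 * (p : ℝ) - 2 * (⌈Δ m⌉ : ℝ)) (m : ℕ) :
    ∀ k : ℕ, Δ (m + k) = Δ m + 2 * (k : ℝ) * (p : ℝ) + (Jaux p Δ m k : ℝ) := by
  intro k
  induction k with
  | zero => simp [Jaux]
  | succ k ih =>
    have h1 : Δ (m + (k + 1)) = Δ (m + k) + 1 + 2 * (p : ℝ) - 2 * (⌈Δ (m + k)⌉ : ℝ) := by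
      have := hrec (m + k); simpa [add_assoc] using this
    have hc : ⌈Δ (m + k)⌉ = ⌈Δ m + 2 * (k : ℝ) * (p : ℝ)⌉ + Jaux p Δ m k := by
      rw [ih, Int.ceil_add_intCast]
    rw [h1, hc, ih, Jaux]
    push_cast
    ring

open Finset in
lemma Jaux_B (p : ℚ) (Δ : ℕ → ℝ) (m : ℕ) :
    ∀ n : ℕ, Jaux p Δ m (2 * n) =
      2 * ∑ l ∈ range (2 * n), (-1 : ℤ)^l * ⌈Δ m + 2 * (l : ℝ) * (p : ℝ)⌉ := by
  intro n
  induction n with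
  | zero => simp [Jaux]
  | succ n ih =>
    have h2 : 2 * (n + 1) = (2 * n + 1) + 1 := by ring
    rw [h2, Jaux, Jaux, ih, sum_range_succ, sum_range_succ]
    have he : (-1 : ℤ) ^ (2 * n) = 1 := by
      rw [pow_mul]; norm_num
    have ho : (-1 : ℤ) ^ (2 * n + 1) = -1 := by
      rw [pow_succ, he]; norm_num
    rw [he, ho]
    ring

open Finset in
/-- Solving the leading-order recursion: if `Δ_L(m+1) = Δ_L(m) + 1 + 2p - 2⌈Δ_L(m)⌉`,
then `Δ_L(m + 2n) = Δ_L(m) + 4np + 2 Σ_{l=0}^{2n-1} (-1)^l ⌈Δ_L(m) + 2lp⌉`. -/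
theorem stmt_10 (p : ℚ) (Δ : ℕ → ℝ)
    (hrec : ∀ m, Δ (m + 1) = Δ m + 1 + 2 * (p : ℝ) - 2 * (⌈Δ m⌉ : ℝ)) :
    ∀ m n : ℕ, Δ (m + 2 * n) =
      Δ m + 4 * n * (p : ℝ) +
        2 * ∑ l ∈ range (2 * n), (-1 : ℝ)^l * (⌈Δ m + 2 * l * (p : ℝ)⌉ : ℝ) := by
  intro m n
  have hA := Jaux_A p Δ hrec m (2 * n)
  have hB := Jaux_B p Δ m n
  rw [hA, hB]
  push_cast
  ring
end

section
/- Let p = a/b with a, b coprime positive integers, b mod 4 ≠ 0, and k' = b if b even, 2b if b odd. Let Δ_L satisfy Δ_L(m+1) = Δ_L(m) + 1 + 2p - 2⌈Δ_L(m)⌉. If Δ_L(m) + 2lp ∉ ℤ for 0 ≤ l < k', then Δ_L(m + k') = Δ_L(m). -/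
/-- Lemma 1: for `p = a/b`, `a, b` coprime, `b` not divisible by `4`, and
`k' = b` (`b` even) or `2b` (`b` odd), the leading iteration is periodic:
`Δ_L(m + k') = Δ_L(m)` under a genericity assumption. -/
theorem stmt_11 (a b : ℕ) (ha : 0 < a) (hb : 0 < b) (hco : Nat.Coprime a b)
    (hb4 : ¬ (4 ∣ b)) (p : ℝ) (hp : p = (a : ℝ) / b)
    (k' : ℕ) (hk' : k' = if Even b then b else 2 * b)
    (Δ : ℕ → ℝ) (hrec : ∀ m, Δ (m + 1) = Δ m + 1 + 2 * p - 2 * (⌈Δ m⌉ : ℝ))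
    (m : ℕ) (hgen : ∀ l : ℕ, l < k' → ¬ ∃ z : ℤ, Δ m + 2 * l * p = z) :
    Δ (m + k') = Δ m := by
  obtain ⟨h, A, hk2, hodd, hA⟩ :
      ∃ (h : ℕ) (A : ℤ), k' = 2 * h ∧ Odd h ∧ 2 * (h : ℝ) * p = A := by
    rcases Nat.even_or_odd b with he | ho
    · obtain ⟨c, hc⟩ := he
      have hc0 : 0 < c := by omega
      refine ⟨c, a, ?_, ?_, ?_⟩
      · rw [hk', if_pos ⟨c, hc⟩]; omega
      · rw [Nat.odd_iff]; omega
      · have hcc : (c : ℝ) ≠ 0 := by positivity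
        rw [hp, hc]; push_cast; field_simp; ring
    · refine ⟨b, 2 * a, ?_, ho, ?_⟩
      · rw [hk', if_neg (Nat.not_even_iff_odd.mpr ho)]
      · have hbb : (b : ℝ) ≠ 0 := by positivity
        rw [hp]; push_cast; field_simp
  set x := Δ m with hx
  set C : ℕ → ℤ := fun l => ⌈x + 2 * l * p⌉ with hC
  set S : ℕ → ℤ := fun l => ∑ j ∈ Finset.range l, (-1) ^ j * C j with hS
  have key : ∀ l, Δ (m + l) = x + 2 * l * p +
      ((if Even l then (2 * S l : ℤ) else 1 - 2 * S l) : ℤ) := by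
    intro l
    induction l with
    | zero => simp [hS, hx]
    | succ l ih =>
      have hceil : (⌈Δ (m + l)⌉ : ℤ)
          = C l + (if Even l then (2 * S l : ℤ) else 1 - 2 * S l) := by
        rw [ih, Int.ceil_add_intCast]
      rw [← add_assoc, hrec (m + l), hceil, ih]
      rcases Nat.even_or_odd l with hl | hl
      · rw [if_pos hl, if_neg (by simpa [Nat.even_add_one] using hl)]
        simp only [hS, Finset.sum_range_succ, hl.neg_one_pow]
        push_cast; ring
      · rw [if_neg (Nat.not_even_iff_odd.mpr hl),
            if_pos (by simpa [Nat.even_add_one] using hl)]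
        simp only [hS, Finset.sum_range_succ, hl.neg_one_pow]
        push_cast; ring
  have hCshift : ∀ j : ℕ, C (j + h) = C j + A := by
    intro j
    have e : x + 2 * (((j : ℕ) + (h : ℕ) : ℕ) : ℝ) * p = x + 2 * (j : ℝ) * p + (A : ℝ) := by
      push_cast
      rw [← hA]; ring
    simp only [hC]
    rw [e, Int.ceil_add_intCast]
  have hgeom : ∑ j ∈ Finset.range h, (-1 : ℤ) ^ j = 1 := by
    rw [neg_one_geom_sum, if_neg (Nat.not_even_iff_odd.mpr hodd)]
  have hterm : ∀ j : ℕ, (-1 : ℤ) ^ (h + j) * C (h + j) = -((-1) ^ j * C j) - (-1) ^ j * A := by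
    intro j
    rw [add_comm h j, hCshift j, pow_add, hodd.neg_one_pow]
    ring
  have hSk : S (2 * h) = -A := by
    have : S (2 * h) = S h + ∑ j ∈ Finset.range h, (-1 : ℤ) ^ (h + j) * C (h + j) := by
      simp only [hS, two_mul, Finset.sum_range_add]
    rw [this, Finset.sum_congr rfl (fun j _ => hterm j), Finset.sum_sub_distrib,
        Finset.sum_neg_distrib, ← Finset.sum_mul, hgeom]
    simp only [hS]
    ring
  have hfin := key k'
  rw [if_pos (hk2 ▸ even_two_mul h), hk2, hSk] at hfin
  rw [hk2, hfin]
  push_cast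
  rw [show (2 : ℝ) * (2 * (h : ℝ)) * p = 2 * (2 * (h : ℝ) * p) by ring, hA]
  ring
end

section
/- Let p = a/b with a, b coprime positive integers, b mod 4 ≠ 0, k' = b (b even) or 2b (b odd), and let Δ_L satisfy the recursion Δ_L(m+1) = Δ_L(m) + 1 + 2p - 2⌈Δ_L(m)⌉ with initial value |Δ_L(1)| < 1. Then |Δ_L(m)| < k'p + 2 for all m in a full period 1 ≤ m ≤ k'. -/
section Stmt14Aux

/-- fractional defect `⌈Δ m⌉ - Δ m ∈ [0,1)` -/
noncomputable def auxU (Δ : ℕ → ℝ) (m : ℕ) : ℝ := (⌈Δ m⌉ : ℝ) - Δ m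

/-- integer increments -/
noncomputable def auxC (Δ : ℕ → ℝ) (m : ℕ) : ℤ := ⌈Δ (m + 1)⌉ + ⌈Δ m⌉ - 1

variable (Δ : ℕ → ℝ) (p : ℝ)

lemma auxU_nonneg (m : ℕ) : 0 ≤ auxU Δ m := by
  have := Int.le_ceil (Δ m); simp only [auxU]; linarith

lemma auxU_lt_one (m : ℕ) : auxU Δ m < 1 := by
  have := Int.ceil_lt_add_one (Δ m); simp only [auxU]; linarith

lemma auxC_spec (hrec : ∀ m, Δ (m + 1) = Δ m + 1 + 2 * p - 2 * (⌈Δ m⌉ : ℝ)) (m : ℕ) :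
    (auxC Δ m : ℝ) = auxU Δ (m + 1) - auxU Δ m + 2 * p := by
  have h := hrec m
  simp only [auxU, auxC]
  push_cast
  linarith

lemma auxC_nonneg (hrec : ∀ m, Δ (m + 1) = Δ m + 1 + 2 * p - 2 * (⌈Δ m⌉ : ℝ))
    (hp : 0 < p) (m : ℕ) : 0 ≤ auxC Δ m := by
  have h := auxC_spec Δ p hrec m
  have h1 := auxU_nonneg Δ (m + 1)
  have h2 := auxU_lt_one Δ m
  have hr : (-1 : ℝ) < (auxC Δ m : ℝ) := by linarith
  have : (-1 : ℤ) < auxC Δ m := by exact_mod_cast hr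
  omega

lemma auxDouble (hrec : ∀ m, Δ (m + 1) = Δ m + 1 + 2 * p - 2 * (⌈Δ m⌉ : ℝ)) (m : ℕ) :
    Δ (m + 2) = Δ m + 2 * (2 * p) - 2 * (auxC Δ m : ℝ) := by
  have h1 := hrec m
  have h2 := hrec (m + 1)
  simp only [auxC]
  push_cast
  linarith

lemma auxChain (hrec : ∀ m, Δ (m + 1) = Δ m + 1 + 2 * p - 2 * (⌈Δ m⌉ : ℝ)) (J : ℕ) :
    ∀ s : ℕ, Δ (J + 2 * s) = Δ J + (2 * s : ℝ) * (2 * p)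
      - 2 * ∑ i ∈ Finset.range s, (auxC Δ (J + 2 * i) : ℝ) := by
  intro s
  induction s with
  | zero => simp
  | succ s ih =>
      have hnat : J + 2 * (s + 1) = (J + 2 * s) + 2 := by ring
      rw [hnat, auxDouble Δ p hrec (J + 2 * s), ih, Finset.sum_range_succ]
      push_cast
      ring

lemma auxCsum (hrec : ∀ m, Δ (m + 1) = Δ m + 1 + 2 * p - 2 * (⌈Δ m⌉ : ℝ)) (J : ℕ) :
    ∀ M : ℕ, ∑ i ∈ Finset.range M, (auxC Δ (J + i) : ℝ)
      = auxU Δ (J + M) - auxU Δ J + (M : ℝ) * (2 * p) := by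
  intro M
  induction M with
  | zero => simp
  | succ M ih =>
      rw [Finset.sum_range_succ, ih, auxC_spec Δ p hrec (J + M),
        show J + (M + 1) = (J + M) + 1 by ring]
      push_cast
      ring

lemma auxParLe (hrec : ∀ m, Δ (m + 1) = Δ m + 1 + 2 * p - 2 * (⌈Δ m⌉ : ℝ))
    (hp : 0 < p) (J : ℕ) : ∀ s : ℕ,
    ∑ i ∈ Finset.range s, (auxC Δ (J + 2 * i) : ℝ)
      ≤ ∑ j ∈ Finset.range (2 * s), (auxC Δ (J + j) : ℝ) := by
  intro s
  induction s with
  | zero => simp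
  | succ s ih =>
      rw [Finset.sum_range_succ, show 2 * (s + 1) = (2 * s) + 1 + 1 by ring,
        Finset.sum_range_succ, Finset.sum_range_succ]
      have c1 : (0 : ℝ) ≤ (auxC Δ (J + (2 * s + 1)) : ℝ) := by
        exact_mod_cast auxC_nonneg Δ p hrec hp (J + (2 * s + 1))
      linarith

lemma auxParNonneg (hrec : ∀ m, Δ (m + 1) = Δ m + 1 + 2 * p - 2 * (⌈Δ m⌉ : ℝ))
    (hp : 0 < p) (J s : ℕ) :
    0 ≤ ∑ i ∈ Finset.range s, (auxC Δ (J + 2 * i) : ℝ) := by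
  apply Finset.sum_nonneg
  intro i _
  exact_mod_cast auxC_nonneg Δ p hrec hp (J + 2 * i)

/-- forward upper bound -/
lemma auxChainU (hrec : ∀ m, Δ (m + 1) = Δ m + 1 + 2 * p - 2 * (⌈Δ m⌉ : ℝ))
    (hp : 0 < p) (J s : ℕ) :
    Δ (J + 2 * s) ≤ Δ J + (2 * s : ℝ) * (2 * p) := by
  have h := auxChain Δ p hrec J s
  have h2 := auxParNonneg Δ p hrec hp J s
  linarith

/-- forward lower bound -/
lemma auxChainL (hrec : ∀ m, Δ (m + 1) = Δ m + 1 + 2 * p - 2 * (⌈Δ m⌉ : ℝ))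
    (hp : 0 < p) (J s : ℕ) :
    Δ J - (2 * s : ℝ) * (2 * p) - 2 < Δ (J + 2 * s) := by
  have h := auxChain Δ p hrec J s
  have h2 := auxParLe Δ p hrec hp J s
  have h3 := auxCsum Δ p hrec J (2 * s)
  have h4 := auxU_lt_one Δ (J + 2 * s)
  have h5 := auxU_nonneg Δ J
  have hc : (((2 * s : ℕ)) : ℝ) = 2 * (s : ℝ) := by push_cast; ring
  rw [h3, hc] at h2
  linarith

/-- periodicity of `auxU` with period `h` when `h * 2p` is an integer -/
lemma auxUPeriod (hrec : ∀ m, Δ (m + 1) = Δ m + 1 + 2 * p - 2 * (⌈Δ m⌉ : ℝ))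
    (h : ℕ) (A : ℤ) (hA : (A : ℝ) = (h : ℝ) * (2 * p)) (J : ℕ) :
    auxU Δ (J + h) = auxU Δ J := by
  have h3 := auxCsum Δ p hrec J h
  set z : ℤ := (∑ i ∈ Finset.range h, auxC Δ (J + i)) - A with hz
  have hcast : (z : ℝ) = auxU Δ (J + h) - auxU Δ J := by
    have hzc : (z : ℝ) = (∑ i ∈ Finset.range h, (auxC Δ (J + i) : ℝ)) - (A : ℝ) := by
      rw [hz]; push_cast; ring
    rw [hzc, h3, hA]; ring
  have h1 := auxU_nonneg Δ (J + h)
  have h2 := auxU_lt_one Δ (J + h)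
  have h4 := auxU_nonneg Δ J
  have h5 := auxU_lt_one Δ J
  have hz1 : (z : ℝ) < 1 := by linarith
  have hz2 : (-1 : ℝ) < (z : ℝ) := by linarith
  have hz1' : z < 1 := by exact_mod_cast hz1
  have hz2' : (-1 : ℤ) < z := by exact_mod_cast hz2
  have hz0 : z = 0 := by omega
  rw [hz0] at hcast
  simp at hcast
  linarith

/-- pairing sum helper -/
lemma auxPair (g : ℕ → ℝ) : ∀ n : ℕ,
    ∑ j ∈ Finset.range (2 * n), g j
      = ∑ i ∈ Finset.range n, (g (2 * i) + g (2 * i + 1)) := by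
  intro n
  induction n with
  | zero => simp
  | succ n ih =>
      rw [show 2 * (n + 1) = (2 * n) + 1 + 1 by ring, Finset.sum_range_succ,
        Finset.sum_range_succ, Finset.sum_range_succ, ih]
      ring

/-- splitting sum helper -/
lemma auxSplit (g : ℕ → ℝ) (m : ℕ) : ∀ n : ℕ,
    ∑ j ∈ Finset.range (m + n), g j
      = ∑ j ∈ Finset.range m, g j + ∑ j ∈ Finset.range n, g (m + j) := by
  intro n
  induction n with
  | zero => simp
  | succ n ih =>
      rw [show m + (n + 1) = (m + n) + 1 by ring, Finset.sum_range_succ,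
        Finset.sum_range_succ, ih]
      ring

/-- key periodicity: over a full period the orbit returns. -/
lemma auxPeriodic (hrec : ∀ m, Δ (m + 1) = Δ m + 1 + 2 * p - 2 * (⌈Δ m⌉ : ℝ))
    (h : ℕ) (hodd : Odd h) (A : ℤ) (hA : (A : ℝ) = (h : ℝ) * (2 * p)) :
    Δ (1 + 2 * h) = Δ 1 := by
  set f : ℕ → ℝ := fun j => (-1 : ℝ) ^ (j + 1) * auxU Δ (j + 1) with hf
  have hfh : ∀ j, f (h + j) = - f j := by
    intro j
    have hper : auxU Δ ((j + 1) + h) = auxU Δ (j + 1) :=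
      auxUPeriod Δ p hrec h A hA (j + 1)
    have hpow : (-1 : ℝ) ^ (h + j + 1) = -((-1 : ℝ) ^ (j + 1)) := by
      rw [show h + j + 1 = h + (j + 1) by ring, pow_add, hodd.neg_one_pow]
      ring
    simp only [hf]
    rw [show h + j + 1 = (j + 1) + h by ring] at hpow ⊢
    rw [hper, hpow]
    ring
  have hsum0 : ∑ j ∈ Finset.range (2 * h), f j = 0 := by
    rw [show (2 : ℕ) * h = h + h by ring, auxSplit]
    have he : ∑ j ∈ Finset.range h, f (h + j) = ∑ j ∈ Finset.range h, (- f j) :=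
      Finset.sum_congr rfl (fun j _ => hfh j)
    rw [he, ← Finset.sum_add_distrib]
    simp
  have hcsum : ∑ i ∈ Finset.range h, (auxC Δ (1 + 2 * i) : ℝ)
      = (h : ℝ) * (2 * p) := by
    have hterm : ∀ i, (auxC Δ (1 + 2 * i) : ℝ)
        = (f (2 * i) + f (2 * i + 1)) + 2 * p := by
      intro i
      have hc := auxC_spec Δ p hrec (1 + 2 * i)
      simp only [hf]
      have e1 : (-1 : ℝ) ^ (2 * i + 1) = -1 := Odd.neg_one_pow ⟨i, by ring⟩
      have e2 : (-1 : ℝ) ^ (2 * i + 1 + 1) = 1 := Even.neg_one_pow ⟨i + 1, by ring⟩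
      rw [e1, e2]
      rw [show 1 + 2 * i + 1 = 2 * i + 1 + 1 by ring,
        show 1 + 2 * i = 2 * i + 1 by ring] at hc
      rw [show 1 + 2 * i = 2 * i + 1 by ring]
      linarith
    calc ∑ i ∈ Finset.range h, (auxC Δ (1 + 2 * i) : ℝ)
        = ∑ i ∈ Finset.range h, ((f (2 * i) + f (2 * i + 1)) + 2 * p) :=
          Finset.sum_congr rfl (fun i _ => hterm i)
      _ = (∑ j ∈ Finset.range (2 * h), f j) + (h : ℝ) * (2 * p) := by
          rw [Finset.sum_add_distrib, ← auxPair f h, Finset.sum_const]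
          simp [nsmul_eq_mul]
      _ = (h : ℝ) * (2 * p) := by rw [hsum0]; ring
  have hchain := auxChain Δ p hrec 1 h
  rw [hcsum] at hchain
  push_cast at hchain
  linarith

end Stmt14Aux

/-- Lemma 4: along a full period `1 ≤ m ≤ k'` of the leading iteration with
`|Δ_L(1)| < 1`, all values are bounded: `|Δ_L(m)| < k' p + 2`. -/
theorem stmt_14 (a b : ℕ) (ha : 0 < a) (hb : 0 < b) (hco : Nat.Coprime a b)
    (hb4 : ¬ (4 ∣ b)) (p : ℝ) (hp : p = (a : ℝ) / b)
    (k' : ℕ) (hk' : k' = if Even b then b else 2 * b)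
    (Δ : ℕ → ℝ) (hrec : ∀ m, Δ (m + 1) = Δ m + 1 + 2 * p - 2 * (⌈Δ m⌉ : ℝ))
    (hinit : |Δ 1| < 1) :
    ∀ m, 1 ≤ m → m ≤ k' → |Δ m| < k' * p + 2 := by
  have hb0 : (0 : ℝ) < b := by exact_mod_cast hb
  have ha0 : (0 : ℝ) < a := by exact_mod_cast ha
  have hp0 : 0 < p := by rw [hp]; positivity
  obtain ⟨h, hk2, hodd, A, hA⟩ :
      ∃ h : ℕ, k' = 2 * h ∧ Odd h ∧ ∃ A : ℤ, (A : ℝ) = (h : ℝ) * (2 * p) := by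
    by_cases hbe : Even b
    · obtain ⟨t, ht⟩ := hbe
      have ht2 : b = 2 * t := by omega
      have ht0 : 0 < t := by omega
      refine ⟨t, by rw [hk', if_pos ⟨t, ht⟩]; omega, ?_, ⟨(a : ℤ), ?_⟩⟩
      · rcases Nat.even_or_odd t with he | ho
        · exfalso; apply hb4; obtain ⟨r, hr⟩ := he; exact ⟨r, by omega⟩
        · exact ho
      · have htR : (0 : ℝ) < (t : ℝ) := by exact_mod_cast ht0
        have hbR : (b : ℝ) = 2 * (t : ℝ) := by exact_mod_cast ht2
        rw [hp, hbR]
        push_cast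
        field_simp
    · have hbo : Odd b := Nat.odd_iff.mpr (Nat.not_even_iff.mp hbe)
      refine ⟨b, by rw [hk', if_neg hbe], hbo, ⟨(2 * a : ℤ), ?_⟩⟩
      rw [hp]
      push_cast
      field_simp
  have hkp : (k' : ℝ) * p = (h : ℝ) * (2 * p) := by
    rw [hk2]; push_cast; ring
  have hinit' := abs_lt.mp hinit
  -- anchor at index 2
  have hceil1 : ⌈Δ 1⌉ = 0 ∨ ⌈Δ 1⌉ = 1 := by
    have h1 : ⌈Δ 1⌉ ≤ 1 := Int.ceil_le.mpr (by push_cast; linarith [hinit'.2])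
    have h2 : (-1 : ℤ) < ⌈Δ 1⌉ := Int.lt_ceil.mpr (by push_cast; linarith [hinit'.1])
    omega
  have h12 := hrec 1
  norm_num at h12
  have hΔ2 : 2 * p - 1 < Δ 2 ∧ Δ 2 ≤ 1 + 2 * p := by
    rcases hceil1 with hc | hc
    · have hd1 : Δ 1 ≤ 0 := by
        have := Int.ceil_le.mp hc.le
        exact_mod_cast this
      rw [hc] at h12
      push_cast at h12
      constructor
      · linarith [hinit'.1]
      · linarith
    · have hd1 : 0 < Δ 1 := by
        have : (0 : ℤ) < ⌈Δ 1⌉ := by omega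
        have := Int.lt_ceil.mp this
        exact_mod_cast this
      rw [hc] at h12
      push_cast at h12
      constructor
      · linarith
      · linarith [hinit'.2]
  -- periodicity anchors
  have hper : Δ (1 + 2 * h) = Δ 1 := auxPeriodic Δ p hrec h hodd A hA
  have hper2 : Δ (2 + 2 * h) = Δ 2 := by
    have h1 := hrec (1 + 2 * h)
    rw [show 1 + 2 * h + 1 = 2 + 2 * h by ring] at h1
    rw [hper] at h1
    rw [h1, h12]
  intro m hm1 hmk
  rw [abs_lt, hkp]
  rcases Nat.even_or_odd m with hme | hmo
  · -- m even : m = 2 + 2*s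
    obtain ⟨t, ht⟩ := hme
    obtain ⟨s, hms⟩ : ∃ s, m = 2 + 2 * s := ⟨t - 1, by omega⟩
    have hsh : s + 1 ≤ h := by omega
    obtain ⟨r, hr, hr1⟩ : ∃ r, h = s + r ∧ 1 ≤ r := ⟨h - s, by omega, by omega⟩
    have hre : (h : ℝ) * (2 * p) = (s : ℝ) * (2 * p) + (r : ℝ) * (2 * p) := by
      have : (h : ℝ) = (s : ℝ) + (r : ℝ) := by exact_mod_cast hr
      rw [this]; ring
    constructor
    · -- lower bound
      by_cases hc : 2 * (s : ℝ) * (2 * p) ≤ (h : ℝ) * (2 * p) - 1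
      · have hcl := auxChainL Δ p hrec hp0 2 s
        rw [show (2 : ℕ) + 2 * s = m from hms.symm] at hcl
        linarith [hΔ2.1]
      · push_neg at hc
        have hcu := auxChainU Δ p hrec hp0 m r
        rw [show m + 2 * r = 2 + 2 * h by omega, hper2] at hcu
        -- Δ 2 ≤ Δ m + 2r(2p), 2r(2p) = 2h(2p) - 2s(2p) < h(2p) + 1
        linarith [hΔ2.1]
    · -- upper bound
      by_cases hc : (2 * (s : ℝ) + 1) * (2 * p) < (h : ℝ) * (2 * p) + 1
      · have hcu := auxChainU Δ p hrec hp0 2 s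
        rw [show (2 : ℕ) + 2 * s = m from hms.symm] at hcu
        have hex : (2 * (s : ℝ) + 1) * (2 * p) = 2 * (s : ℝ) * (2 * p) + 2 * p := by
          ring
        linarith [hΔ2.2]
      · push_neg at hc
        have hH2 : (h : ℝ) < 2 * (s : ℝ) + 1 := by nlinarith [hp0]
        obtain ⟨r', hr'⟩ : ∃ r', h = s + 1 + r' := ⟨h - s - 1, by omega⟩
        have hcu := auxChainU Δ p hrec hp0 (m + 1) r'
        rw [show m + 1 + 2 * r' = 1 + 2 * h by omega, hper] at hcu
        -- Δ 1 ≤ Δ (m+1) + 2r'(2p)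
        have hst : Δ m + Δ (m + 1) ≤ 1 + 2 * p := by
          have h1 := hrec m
          have h2 := Int.le_ceil (Δ m)
          linarith
        have hr'R : (h : ℝ) = (s : ℝ) + 1 + (r' : ℝ) := by exact_mod_cast hr'
        have hr's : (r' : ℝ) < (s : ℝ) := by linarith
        have hmul : (r' : ℝ) * (2 * p) ≤ (s : ℝ) * (2 * p) :=
          mul_le_mul_of_nonneg_right hr's.le (by positivity)
        have hre' : (h : ℝ) * (2 * p)
            = (s : ℝ) * (2 * p) + 2 * p + (r' : ℝ) * (2 * p) := by
          rw [hr'R]; ring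
        linarith [hinit'.1]
  · -- m odd : m = 1 + 2*s
    obtain ⟨t, ht⟩ := hmo
    obtain ⟨s, hms⟩ : ∃ s, m = 1 + 2 * s := ⟨t, by omega⟩
    have hsh : s ≤ h := by omega
    obtain ⟨r, hr⟩ : ∃ r, h = s + r := ⟨h - s, by omega⟩
    have hre : (h : ℝ) * (2 * p) = (s : ℝ) * (2 * p) + (r : ℝ) * (2 * p) := by
      have : (h : ℝ) = (s : ℝ) + (r : ℝ) := by exact_mod_cast hr
      rw [this]; ring
    constructor
    · -- lower bound
      by_cases hc : 2 * (s : ℝ) * (2 * p) ≤ (h : ℝ) * (2 * p) - 1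
      · have hcl := auxChainL Δ p hrec hp0 1 s
        rw [show (1 : ℕ) + 2 * s = m from hms.symm] at hcl
        linarith [hinit'.1]
      · push_neg at hc
        have hcu := auxChainU Δ p hrec hp0 m r
        rw [show m + 2 * r = 1 + 2 * h by omega, hper] at hcu
        linarith [hinit'.1]
    · -- upper bound
      by_cases hc : 2 * (s : ℝ) * (2 * p) ≤ (h : ℝ) * (2 * p) + 1
      · have hcu := auxChainU Δ p hrec hp0 1 s
        rw [show (1 : ℕ) + 2 * s = m from hms.symm] at hcu
        linarith [hinit'.2]
      · push_neg at hc
        have hcl := auxChainL Δ p hrec hp0 m r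
        rw [show m + 2 * r = 1 + 2 * h by omega, hper] at hcl
        linarith [hinit'.2]
end

section
/- Fix coprime positive integers a, b with b not divisible by 4, p = a/b, and k' = b (b even) or 2b (b odd). Suppose 0 < |Δ| < 1/k'. Then the set { ((Δ + 2(m-1)p + 1/2) mod 1) - 1/2 : m = 1, ..., k'/2 } equals the lattice { -1/2 + 1/k' + Δ, -1/2 + 3/k' + Δ, ..., 1/2 - 1/k' + Δ }, and exactly one element of this set has absolute value less than 1/k' (namely Δ itself, at m = 1). -/
lemma core15 (n s j : ℕ) (hns : n = 2*s+1) (hj : j < n) (Δ : ℝ)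
    (hΔ : |Δ| < 1/(2*(n:ℝ))) :
    Int.fract (Δ + (j:ℝ)/(n:ℝ) + 1/2) - 1/2
      = -(1/2) + (2 * ((if j ≤ s then s + j else j - s - 1 : ℕ) : ℝ) + 1) / (2*(n:ℝ)) + Δ := by
  have hn1 : (1:ℝ) ≤ (n:ℝ) := by exact_mod_cast Nat.one_le_iff_ne_zero.mpr (by omega)
  have hn0 : (0:ℝ) < (n:ℝ) := by linarith
  have hnR : (n:ℝ) = 2*(s:ℝ)+1 := by exact_mod_cast hns
  have habs := abs_lt.mp hΔ
  have h12 : 1/(2*(n:ℝ)) ≤ 1/2 := by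
    rw [div_le_div_iff₀ (by positivity) (by norm_num)]; linarith
  by_cases hcase : j ≤ s
  · have hjn : (j:ℝ)/n ≤ (s:ℝ)/n := by gcongr
    have hsn : (s:ℝ)/n = 1/2 - 1/(2*(n:ℝ)) := by rw [hnR]; field_simp; ring
    have h0j : (0:ℝ) ≤ (j:ℝ)/n := by positivity
    rw [if_pos hcase, Int.fract_eq_self.2 ⟨by linarith [habs.1], by linarith [habs.2]⟩]
    push_cast
    rw [hnR]
    field_simp
    ring
  · have hs1 : s + 1 ≤ j := by omega
    have hjge : ((s:ℝ)+1)/n ≤ (j:ℝ)/n := by gcongr; exact_mod_cast hs1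
    have h1 : ((s:ℝ)+1)/n = 1/2 + 1/(2*(n:ℝ)) := by rw [hnR]; field_simp; ring
    have hjlt : (j:ℝ)/n < 1 := (div_lt_one hn0).mpr (by exact_mod_cast hj)
    have hshift : Int.fract (Δ + (j:ℝ)/n + 1/2) = Int.fract (Δ + (j:ℝ)/n + 1/2 - 1) := by
      rw [show Δ + (j:ℝ)/n + 1/2 - 1 = Δ + (j:ℝ)/n + 1/2 - ((1:ℤ):ℝ) by norm_num,
        Int.fract_sub_intCast]
    rw [if_neg hcase, hshift,
      Int.fract_eq_self.2 ⟨by linarith [habs.1], by linarith [habs.2]⟩]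
    have hc : ((j - s - 1:ℕ):ℝ) = (j:ℝ) - (s:ℝ) - 1 := by
      rw [Nat.sub_sub, Nat.cast_sub (by omega)]; push_cast; ring
    rw [hc, hnR]
    field_simp
    ring

/-- Lemma 3 (lattice structure): for `p = a/b`, `b` not divisible by `4`,
`k' = b` (`b` even) or `2b` (`b` odd), and `0 < |Δ| < 1/k'`, the values
`((Δ + 2(m-1)p + 1/2) mod 1) - 1/2` for `m = 1, …, k'/2` fill the lattice
`{-1/2 + (2j+1)/k' + Δ : j = 0, …, k'/2 - 1}`, and exactly one of them (namely `Δ`,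
at `m = 1`) has absolute value less than `1/k'`. -/
theorem stmt_15 (a b : ℕ) (ha : 0 < a) (hb : 0 < b) (hco : Nat.Coprime a b)
    (hb4 : ¬ (4 ∣ b)) (p : ℝ) (hp : p = (a : ℝ) / b)
    (k' : ℕ) (hk' : k' = if Even b then b else 2 * b)
    (Δ : ℝ) (hΔ0 : 0 < |Δ|) (hΔ1 : |Δ| < 1 / k') :
    ((fun m : ℕ => Int.fract (Δ + 2 * ((m : ℝ) - 1) * p + 1/2) - 1/2) ''
        (Set.Icc 1 (k' / 2))
      = {y : ℝ | ∃ j : ℕ, j < k' / 2 ∧ y = -(1/2) + (2 * j + 1) / k' + Δ}) ∧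
    (Int.fract (Δ + 2 * ((1 : ℝ) - 1) * p + 1/2) - 1/2 = Δ) ∧
    (∀ m ∈ Set.Icc 1 (k' / 2),
      |Int.fract (Δ + 2 * ((m : ℝ) - 1) * p + 1/2) - 1/2| < 1 / k' → m = 1) := by
  obtain ⟨n, g, hk2, hnodd, hgco, hkey⟩ :
      ∃ n g : ℕ, k' = 2*n ∧ Odd n ∧ Nat.Coprime g n ∧
        ∀ m : ℕ, 1 ≤ m → 2*((m:ℝ)-1)*p = (((m-1)*g : ℕ):ℝ)/(n:ℝ) := by
    by_cases hbe : Even b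
    · obtain ⟨c, hc⟩ := hbe
      have hcb : b = 2*c := by omega
      refine ⟨c, a, by rw [hk', if_pos ⟨c, hc⟩]; omega, ?_, ?_, ?_⟩
      · rcases Nat.even_or_odd c with he | ho
        · exact absurd (by obtain ⟨d, hd⟩ := he; omega : 4 ∣ b) hb4
        · exact ho
      · exact Nat.Coprime.coprime_dvd_right ⟨2, by omega⟩ hco
      · intro m hm
        have hc0 : (c:ℝ) ≠ 0 := Nat.cast_ne_zero.mpr (by omega)
        have hm1 : ((m-1:ℕ):ℝ) = (m:ℝ)-1 := by
          rw [Nat.cast_sub hm]; norm_num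
        rw [hp, show (b:ℝ) = 2*(c:ℝ) by exact_mod_cast congrArg Nat.cast hcb]
        push_cast [hm1]
        field_simp
    · have hbodd : Odd b := Nat.odd_iff.mpr (Nat.not_even_iff.mp hbe)
      refine ⟨b, 2*a, by rw [hk', if_neg hbe], hbodd, ?_, ?_⟩
      · exact Nat.Coprime.mul
          ((Nat.Prime.coprime_iff_not_dvd Nat.prime_two).mpr
            (by have := Nat.odd_iff.mp hbodd; omega)) hco
      · intro m hm
        have hb0 : (b:ℝ) ≠ 0 := Nat.cast_ne_zero.mpr (by omega)
        have hm1 : ((m-1:ℕ):ℝ) = (m:ℝ)-1 := by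
          rw [Nat.cast_sub hm]; norm_num
        rw [hp]
        push_cast [hm1]
        field_simp
  have hn0 : 0 < n := by rcases hnodd with ⟨t, ht⟩; omega
  haveI : NeZero n := ⟨by omega⟩
  obtain ⟨s, hns⟩ := hnodd
  have hns' : n = 2*s+1 := by omega
  have hk'half : k'/2 = n := by omega
  have hkR : (k':ℝ) = 2*(n:ℝ) := by rw [hk2]; push_cast; ring
  have hΔ' : |Δ| < 1/(2*(n:ℝ)) := by rwa [hkR] at hΔ1
  have hn1R : (1:ℝ) ≤ (n:ℝ) := by exact_mod_cast hn0
  have hmain : ∀ m : ℕ, 1 ≤ m →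
      Int.fract (Δ + 2*((m:ℝ)-1)*p + 1/2) - 1/2
        = -(1/2) + (2*((if ((m-1)*g) % n ≤ s then s + ((m-1)*g) % n
            else ((m-1)*g) % n - s - 1 : ℕ):ℝ)+1)/(2*(n:ℝ)) + Δ := by
    intro m hm
    have hcast : ((((m-1)*g : ℕ)):ℝ)
        = ((((m-1)*g) % n : ℕ):ℝ) + (n:ℝ)*((((m-1)*g)/n : ℕ):ℝ) := by
      exact_mod_cast (Nat.mod_add_div ((m-1)*g) n).symm
    have hnz : (n:ℝ) ≠ 0 := by positivity
    have hMd : Δ + (((m-1)*g : ℕ):ℝ)/(n:ℝ) + 1/2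
        = Δ + ((((m-1)*g) % n : ℕ):ℝ)/(n:ℝ) + 1/2 + (((((m-1)*g)/n : ℕ):ℤ):ℝ) := by
      rw [show (((((m-1)*g)/n : ℕ):ℤ):ℝ) = ((((m-1)*g)/n : ℕ):ℝ) from Int.cast_natCast _]
      push_cast [Nat.cast_sub hm] at hcast
      field_simp
      push_cast [Nat.cast_sub hm]
      linarith [hcast]
    rw [hkey m hm, hMd, Int.fract_add_intCast]
    exact core15 n s _ hns' (Nat.mod_lt _ hn0) Δ hΔ'
  refine ⟨?_, ?_, ?_⟩
  · ext y
    simp only [Set.mem_image, Set.mem_Icc, Set.mem_setOf_eq]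
    constructor
    · rintro ⟨m, ⟨hm1, hm2⟩, rfl⟩
      have hjlt : ((m-1)*g) % n < n := Nat.mod_lt _ hn0
      refine ⟨if ((m-1)*g) % n ≤ s then s + ((m-1)*g) % n else ((m-1)*g) % n - s - 1,
        by rw [hk'half]; split_ifs <;> omega, ?_⟩
      rw [hmain m hm1, hkR]
    · rintro ⟨i, hi, rfl⟩
      rw [hk'half] at hi
      set j := if s ≤ i then i - s else i + s + 1 with hjdef
      have hjn : j < n := by rw [hjdef]; split_ifs <;> omega
      set u := ZMod.unitOfCoprime g hgco with hu
      set r := ((j : ZMod n) * ((u⁻¹ : (ZMod n)ˣ) : ZMod n)).val with hr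
      have hrlt : r < n := ZMod.val_lt _
      have hjm : (r * g) % n = j := by
        have h1 : (((r*g : ℕ)) : ZMod n) = (j : ZMod n) := by
          push_cast
          rw [hr, ZMod.natCast_val, ZMod.cast_id, mul_assoc,
            show (g : ZMod n) = (u : ZMod n) from (ZMod.coe_unitOfCoprime g hgco).symm,
            show ((u⁻¹ : (ZMod n)ˣ) : ZMod n) * (u : ZMod n) = 1 from Units.inv_mul u,
            mul_one]
        have h2 := congrArg ZMod.val h1
        rwa [ZMod.val_natCast, ZMod.val_natCast, Nat.mod_eq_of_lt hjn] at h2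
      refine ⟨r + 1, ⟨by omega, by omega⟩, ?_⟩
      rw [hmain (r+1) (by omega)]
      simp only [Nat.add_sub_cancel]
      have hIi : (if (r*g) % n ≤ s then s + (r*g) % n else (r*g) % n - s - 1) = i := by
        rw [hjm, hjdef]; split_ifs <;> omega
      rw [hIi, hkR]
  · have he : Δ + 2*((1:ℝ)-1)*p + 1/2 = Δ + 1/2 := by ring
    have habs := abs_lt.mp hΔ'
    have h12 : 1/(2*(n:ℝ)) ≤ 1/2 := by
      rw [div_le_div_iff₀ (by positivity) (by norm_num)]; linarith
    rw [he, Int.fract_eq_self.2 ⟨by linarith, by linarith⟩]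
    ring
  · intro m hm hlt
    rw [Set.mem_Icc, hk'half] at hm
    rw [hmain m hm.1, hkR] at hlt
    set j := ((m-1)*g) % n with hjd
    have hjn : j < n := Nat.mod_lt _ hn0
    set I := (if j ≤ s then s + j else j - s - 1) with hI
    have hIn : I < n := by rw [hI]; split_ifs <;> omega
    have hnR : (n:ℝ) = 2*(s:ℝ)+1 := by exact_mod_cast hns'
    have hval : -(1/2) + (2*(I:ℝ)+1)/(2*(n:ℝ)) + Δ = ((I:ℝ) - s)/n + Δ := by
      rw [hnR]; field_simp; ring
    rw [hval] at hlt
    have habs := abs_lt.mp hΔ'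
    have hIs : I = s := by
      by_contra hne
      have h1 : (1:ℝ) ≤ |(I:ℝ) - (s:ℝ)| := by
        rcases (by omega : I + 1 ≤ s ∨ s + 1 ≤ I) with h | h
        · have hc : (I:ℝ) + 1 ≤ s := by exact_mod_cast h
          rw [abs_of_nonpos (by linarith)]
          linarith
        · have hc : (s:ℝ) + 1 ≤ I := by exact_mod_cast h
          rw [abs_of_nonneg (by linarith)]
          linarith
      have h2 : |((I:ℝ) - s)/n| = |(I:ℝ) - s|/n := by
        rw [abs_div, abs_of_pos (by linarith : (0:ℝ) < (n:ℝ))]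
      have h3 : |((I:ℝ) - s)/n| ≤ |((I:ℝ) - s)/n + Δ| + |Δ| := by
        calc |((I:ℝ) - s)/n| = |((I:ℝ) - s)/n + Δ + (-Δ)| := by ring_nf
        _ ≤ |((I:ℝ) - s)/n + Δ| + |(-Δ)| := abs_add_le _ _
        _ = |((I:ℝ) - s)/n + Δ| + |Δ| := by rw [abs_neg]
      have h4 : 1/(n:ℝ) ≤ |(I:ℝ) - s|/n := by gcongr
      have h5 : 1/(n:ℝ) = 2*(1/(2*(n:ℝ))) := by field_simp
      linarith [h2, h3, h4, hlt, hΔ']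
    have hj0 : j = 0 := by
      rw [hI] at hIs; split_ifs at hIs <;> omega
    have hdvd : n ∣ (m-1)*g := Nat.dvd_of_mod_eq_zero hj0
    have hdvd2 : n ∣ (m-1) := (Nat.Coprime.symm hgco).dvd_of_dvd_mul_right hdvd
    have hm0 : m - 1 = 0 := Nat.eq_zero_of_dvd_of_lt hdvd2 (by omega)
    omega
end

section
/- Let 0 < p < 1/2 with bp = a for coprime positive integers a, b, b mod 4 ≠ 0, k' = b (b even) or 2b (b odd), and 0 < |Δ| < 1/k' with Δ irrational. Then 2p·Σ_{n=0}^{k'/2 - 1} ⌈Δ + 4pn⌉ = (k'p/2)(2k'p + 1) - 2k'p² + p·sgn(Δ). -/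
open Finset


lemma pair_div (c D k : ℕ) (hco : Nat.Coprime D c) (hk1 : 1 ≤ k) (hkc : k < c) :
    D * k / c + D * (c - k) / c = D - 1 := by
  have hc : 0 < c := lt_of_le_of_lt (Nat.zero_le _) hkc
  set B := D * (c - k) with hBdef
  set q := D * k / c with hqdef
  set q2 := B / c with hq2def
  set r := D * k % c with hrdef
  set r2 := B % c with hr2def
  have hA := Nat.div_add_mod (D * k) c
  have hB := Nat.div_add_mod B c
  have hrc : r < c := Nat.mod_lt _ hc
  have hr2c : r2 < c := Nat.mod_lt _ hc
  have hr0 : r ≠ 0 := by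
    intro h
    have hdvd : c ∣ D * k := Nat.dvd_of_mod_eq_zero h
    have hck : c ∣ k := (hco.symm).dvd_of_dvd_mul_left hdvd
    have := Nat.le_of_dvd (by omega) hck
    omega
  have hx : B + D * k = D * c := by
    rw [hBdef, ← Nat.mul_add, Nat.sub_add_cancel hkc.le]
  have hAz : (c:ℤ) * q + r = (D:ℤ) * k := by exact_mod_cast hA
  have hBz : (c:ℤ) * q2 + r2 = (B:ℤ) := by exact_mod_cast hB
  have hxz : (B:ℤ) + (D:ℤ) * k = (D:ℤ) * c := by exact_mod_cast hx
  have hct : (c:ℤ) * ((D:ℤ) - q - q2) = r + r2 := by linear_combination -hAz - hBz - hxz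
  have hc' : (0:ℤ) < c := by exact_mod_cast hc
  have h1 : 0 < (c:ℤ) * ((D:ℤ) - q - q2) := by
    rw [hct]; have h : 0 < r := Nat.pos_of_ne_zero hr0; push_cast; omega
  have h2 : (c:ℤ) * ((D:ℤ) - q - q2) < c * 2 := by
    rw [hct]; push_cast; omega
  have h3 : 0 < ((D:ℤ) - q - q2) := by
    rcases mul_pos_iff.mp h1 with ⟨_, h⟩ | ⟨h, _⟩
    · exact h
    · linarith
  have h4 : ((D:ℤ) - q - q2) < 2 := lt_of_mul_lt_mul_left h2 hc'.le
  clear_value B q q2 r r2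
  omega

lemma two_mul_sum_div (c D : ℕ) (hc : 0 < c) (hco : Nat.Coprime D c) :
    2 * ∑ n ∈ range c, D * n / c = (c - 1) * (D - 1) := by
  have h0 : ∑ n ∈ range c, D * n / c = ∑ j ∈ range (c-1), D * (1 + j) / c := by
    rw [Finset.range_eq_Ico, Finset.sum_eq_sum_Ico_succ_bot hc]
    simp [Finset.sum_Ico_eq_sum_range]
  have key : ∑ j ∈ range (c-1), D * (1 + j) / c + ∑ j ∈ range (c-1), D * (1 + j) / c
      = ∑ _j ∈ range (c-1), (D - 1) := by
    nth_rewrite 1 [← Finset.sum_range_reflect (fun j => D * (1 + j) / c) (c-1)]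
    rw [← Finset.sum_add_distrib]
    refine Finset.sum_congr rfl fun j hj => ?_
    have hj' := Finset.mem_range.mp hj
    have e1 : 1 + (c - 1 - 1 - j) = c - (1 + j) := by omega
    rw [e1]
    exact (add_comm _ _).trans (pair_div c D (1+j) hco (by omega) (by omega))
  rw [h0, two_mul, key, Finset.sum_const, Finset.card_range, smul_eq_mul]

lemma ceil_sum (c D : ℕ) (hc : 0 < c) (hD : 0 < D) (hco : Nat.Coprime D c) (Δ : ℝ)
    (hΔ0 : Δ ≠ 0) (hΔ1 : |Δ| * c < 1) :
    2 * ∑ n ∈ range c, ⌈Δ + (D * n : ℝ) / c⌉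
      = ((c:ℤ) - 1) * ((D:ℤ) - 1) + 2 * c - (if Δ < 0 then 2 else 0) := by
  have hc0 : (0:ℝ) < c := by exact_mod_cast hc
  have hceil : ∀ n, 0 < n → n < c → ⌈Δ + (D * n : ℝ) / c⌉ = (D * n / c : ℕ) + 1 := by
    intro n hn1 hnc
    have h := Nat.div_add_mod (D * n) c
    set q := D * n / c with hqdef
    set r := D * n % c with hrdef
    have hrc : r < c := Nat.mod_lt _ hc
    have hr0 : r ≠ 0 := by
      intro h0
      have hdvd : c ∣ D * n := Nat.dvd_of_mod_eq_zero h0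
      have hcn : c ∣ n := (hco.symm).dvd_of_dvd_mul_left hdvd
      have := Nat.le_of_dvd hn1 hcn
      omega
    have hz : ((c:ℝ)) * q + r = (D:ℝ) * n := by exact_mod_cast h
    have hq : (D:ℝ) * n / c = q + r / c := by
      field_simp
      linarith
    have hr1 : (1:ℝ) ≤ r := by
      have : 1 ≤ r := Nat.one_le_iff_ne_zero.mpr hr0
      exact_mod_cast this
    have hcr : (1:ℝ) ≤ (c:ℝ) - r := by
      have : (r:ℝ) + 1 ≤ c := by exact_mod_cast hrc
      linarith
    have h1 : |Δ| < r / c := by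
      rw [lt_div_iff₀ hc0]
      exact lt_of_lt_of_le hΔ1 hr1
    have h2 : |Δ| < ((c:ℝ) - r) / c := by
      rw [lt_div_iff₀ hc0]
      exact lt_of_lt_of_le hΔ1 hcr
    rw [Int.ceil_eq_iff]
    constructor
    · push_cast
      rw [hq]
      have := neg_abs_le Δ
      linarith
    · push_cast
      rw [hq]
      have := le_abs_self Δ
      have : Δ ≤ (c - r)/c := le_of_lt (lt_of_le_of_lt (le_abs_self Δ) h2)
      have hrr : (r:ℝ)/c + ((c:ℝ)-r)/c = 1 := by field_simp; ring
      linarith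
  have habs1 : |Δ| < 1 := by
    have h1c : (1:ℝ) ≤ c := by exact_mod_cast hc
    nlinarith [abs_nonneg Δ]
  have hceil0 : ⌈Δ⌉ = if Δ < 0 then 0 else 1 := by
    split_ifs with h
    · rw [Int.ceil_eq_iff]
      constructor
      · push_cast
        have := neg_abs_le Δ
        linarith
      · push_cast; linarith
    · push_neg at h
      rw [Int.ceil_eq_iff]
      have hpos : 0 < Δ := lt_of_le_of_ne h (Ne.symm hΔ0)
      constructor
      · push_cast; linarith
      · push_cast
        have := le_abs_self Δ
        linarith
  rw [Finset.range_eq_Ico, Finset.sum_eq_sum_Ico_succ_bot hc]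
  have h00 : ⌈Δ + (D * (0:ℕ) : ℝ) / c⌉ = if Δ < 0 then 0 else 1 := by
    rw [show ((D:ℝ) * ((0:ℕ):ℝ) / c) = 0 by simp, add_zero]
    exact hceil0
  rw [h00]
  have hsum : ∑ n ∈ Ico 1 c, ⌈Δ + (D * n : ℝ) / c⌉
      = ∑ n ∈ Ico 1 c, ((D * n / c : ℕ) + 1 : ℤ) := by
    refine Finset.sum_congr rfl fun n hn => ?_
    obtain ⟨h1, h2⟩ := Finset.mem_Ico.mp hn
    exact hceil n h1 h2
  rw [hsum, Finset.sum_add_distrib, Finset.sum_const, Nat.card_Ico]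
  have hTnat : ∑ n ∈ Ico 1 c, D * n / c = ∑ n ∈ range c, D * n / c := by
    rw [Finset.range_eq_Ico, Finset.sum_eq_sum_Ico_succ_bot hc]
    simp
  have hT : ∑ n ∈ Ico 1 c, ((D * n / c : ℕ) : ℤ) = ((∑ n ∈ range c, D * n / c : ℕ) : ℤ) := by
    rw [← hTnat, Nat.cast_sum]
  rw [hT]
  have h2T := two_mul_sum_div c D hc hco
  set S : ℕ := ∑ n ∈ range c, D * n / c with hS
  have h2Tz : 2 * (S : ℤ) = ((c:ℤ) - 1) * ((D:ℤ) - 1) := by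
    have h1 : ((2 * S : ℕ) : ℤ) = (((c - 1) * (D - 1) : ℕ) : ℤ) := by exact_mod_cast congrArg (Nat.cast : ℕ → ℤ) h2T
    push_cast at h1
    have e1 : (((c - 1) : ℕ) : ℤ) = (c:ℤ) - 1 := by omega
    have e2 : (((D - 1) : ℕ) : ℤ) = (D:ℤ) - 1 := by omega
    rw [e1, e2] at h1
    linarith
  have e1 : (((c - 1) : ℕ) : ℤ) = (c:ℤ) - 1 := by omega
  rw [nsmul_eq_mul, mul_one, e1]
  split_ifs with h <;> linarith

/-- The ceiling sum evaluation: for `p = a/b ∈ (0, 1/2)` with `a, b` coprime, `b` not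
divisible by `4`, `k' = b` (`b` even) or `2b` (`b` odd), and irrational `Δ` with
`0 < |Δ| < 1/k'`, one has
`2p Σ_{n=0}^{k'/2-1} ⌈Δ + 4pn⌉ = (k'p/2)(2k'p + 1) - 2k'p² + p·sgn Δ`. -/
theorem stmt_17 (a b : ℕ) (ha : 0 < a) (hb : 0 < b) (hco : Nat.Coprime a b)
    (hb4 : ¬ (4 ∣ b)) (p : ℝ) (hp : p = (a : ℝ) / b) (hp0 : 0 < p) (hp1 : p < 1/2)
    (k' : ℕ) (hk' : k' = if Even b then b else 2 * b)
    (Δ : ℝ) (hirr : Irrational Δ) (hΔ0 : 0 < |Δ|) (hΔ1 : |Δ| < 1 / k') :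
    2 * p * ∑ n ∈ range (k' / 2), (⌈Δ + 4 * p * n⌉ : ℝ)
      = (k' * p / 2) * (2 * k' * p + 1) - 2 * k' * p^2 + p * Real.sign Δ := by
  have hΔne : Δ ≠ 0 := by
    intro h; rw [h, abs_zero] at hΔ0; exact lt_irrefl _ hΔ0
  rcases Nat.even_or_odd b with hev | hodd
  · -- b even
    obtain ⟨m, hm⟩ := hev
    have hm2 : b = 2 * m := by omega
    have hm0 : 0 < m := by omega
    have hmodd : Odd m := by
      rcases Nat.even_or_odd m with he | ho
      · obtain ⟨t, ht⟩ := he; exact absurd ⟨t, by omega⟩ hb4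
      · exact ho
    have hk'v : k' = 2 * m := by rw [hk', if_pos ⟨m, hm⟩]; exact hm2
    have hK : k' / 2 = m := by omega
    have hco2m : Nat.Coprime 2 m := Nat.coprime_two_left.mpr hmodd
    have hcoam : Nat.Coprime a m := Nat.Coprime.coprime_dvd_right ⟨2, by omega⟩ hco
    have hcoD : Nat.Coprime (2 * a) m := Nat.Coprime.mul hco2m hcoam
    have hmR : (0:ℝ) < m := by exact_mod_cast hm0
    have hbR : (b:ℝ) = 2 * m := by exact_mod_cast hm2
    have hk'R : (k':ℝ) = 2 * m := by exact_mod_cast hk'v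
    have hΔ1' : |Δ| * m < 1 := by
      rw [hk'R, lt_div_iff₀ (by positivity)] at hΔ1
      nlinarith [abs_nonneg Δ]
    have hcs := ceil_sum m (2*a) hm0 (by positivity) hcoD Δ hΔne hΔ1'
    set Sz : ℤ := ∑ n ∈ range m, ⌈Δ + ((2*a : ℕ) * n : ℝ) / m⌉ with hSz
    have hsum_eq : ∑ n ∈ range (k'/2), (⌈Δ + 4 * p * n⌉ : ℝ) = ((Sz : ℤ) : ℝ) := by
      rw [hK, hSz]
      push_cast
      refine Finset.sum_congr rfl fun n _ => ?_
      congr 2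
      rw [hp, hbR]
      field_simp
      ring
    have hpb : p * (2 * (m:ℝ)) = a := by
      rw [hp, hbR]; field_simp
    rw [hsum_eq, hK] at *
    rw [hk'R]
    rcases lt_or_gt_of_ne hΔne with hneg | hpos
    · rw [if_pos hneg] at hcs
      rw [Real.sign_of_neg hneg]
      have key : 2 * ((Sz:ℤ):ℝ) = ((m:ℝ) - 1) * (2*(a:ℝ) - 1) + 2*m - 2 := by
        exact_mod_cast hcs
      linear_combination p * key - 2*p*((m:ℝ)-1) * hpb
    · rw [if_neg (by linarith)] at hcs
      rw [Real.sign_of_pos hpos]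
      have key : 2 * ((Sz:ℤ):ℝ) = ((m:ℝ) - 1) * (2*(a:ℝ) - 1) + 2*m - 0 := by
        exact_mod_cast hcs
      linear_combination p * key - 2*p*((m:ℝ)-1) * hpb
  · -- b odd
    have hk'v : k' = 2 * b := by
      rw [hk', if_neg (by simpa [Nat.even_iff, Nat.odd_iff] using hodd)]
    have hK : k' / 2 = b := by omega
    have hco2b : Nat.Coprime 2 b := Nat.coprime_two_left.mpr hodd
    have hco4b : Nat.Coprime 4 b := by
      have := Nat.Coprime.mul hco2b hco2b
      simpa using this
    have hcoD : Nat.Coprime (4 * a) b := Nat.Coprime.mul hco4b hco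
    have hbR0 : (0:ℝ) < b := by exact_mod_cast hb
    have hk'R : (k':ℝ) = 2 * b := by exact_mod_cast hk'v
    have hΔ1' : |Δ| * b < 1 := by
      rw [hk'R, lt_div_iff₀ (by positivity)] at hΔ1
      nlinarith [abs_nonneg Δ]
    have hcs := ceil_sum b (4*a) hb (by positivity) hcoD Δ hΔne hΔ1'
    set Sz : ℤ := ∑ n ∈ range b, ⌈Δ + ((4*a : ℕ) * n : ℝ) / b⌉ with hSz
    have hsum_eq : ∑ n ∈ range (k'/2), (⌈Δ + 4 * p * n⌉ : ℝ) = ((Sz : ℤ) : ℝ) := by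
      rw [hK, hSz]
      push_cast
      refine Finset.sum_congr rfl fun n _ => ?_
      congr 2
      rw [hp]
      field_simp
    have hpb : p * (b:ℝ) = a := by
      rw [hp]; field_simp
    rw [hsum_eq, hK] at *
    rw [hk'R]
    rcases lt_or_gt_of_ne hΔne with hneg | hpos
    · rw [if_pos hneg] at hcs
      rw [Real.sign_of_neg hneg]
      have key : 2 * ((Sz:ℤ):ℝ) = ((b:ℝ) - 1) * (4*(a:ℝ) - 1) + 2*b - 2 := by
        exact_mod_cast hcs
      linear_combination p * key - 4*p*((b:ℝ)-1) * hpb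
    · rw [if_neg (by linarith)] at hcs
      rw [Real.sign_of_pos hpos]
      have key : 2 * ((Sz:ℤ):ℝ) = ((b:ℝ) - 1) * (4*(a:ℝ) - 1) + 2*b - 0 := by
        exact_mod_cast hcs
      linear_combination p * key - 4*p*((b:ℝ)-1) * hpb
end

section
/- Let (p, x) evolve by p(i+1) = p(i) - sgn(x(i)), x(i+1) = x(i) + p(i) - sgn(x(i)) with p(1) = k/2 and x(1) = p(1), where k is a positive integer. Then sgn(x(i)) = +1 for 1 ≤ i ≤ k, and x(k+1) = 0. -/
/-- Starting from `p(1) = x(1) = k/2` with `k ≥ 1`, the signs are all `+1` for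
`1 ≤ i ≤ k` and `x(k+1) = 0`. -/
theorem stmt_18 (k : ℕ) (hk : 0 < k) (p x : ℕ → ℝ)
    (hp1 : p 1 = k / 2) (hx1 : x 1 = k / 2)
    (hp : ∀ i, 1 ≤ i → p (i + 1) = p i - Real.sign (x i))
    (hx : ∀ i, 1 ≤ i → x (i + 1) = x i + p i - Real.sign (x i)) :
    (∀ i, 1 ≤ i → i ≤ k → Real.sign (x i) = 1) ∧ x (k + 1) = 0 := by
  have key : ∀ i, 1 ≤ i → i ≤ k + 1 →
      p i = (k : ℝ) / 2 - ((i : ℝ) - 1) ∧ x i = (i : ℝ) * ((k : ℝ) - i + 1) / 2 := by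
    intro i
    induction i with
    | zero => intro h; omega
    | succ n ih =>
      intro _ hn1
      rcases Nat.eq_or_lt_of_le (Nat.one_le_iff_ne_zero.mpr (Nat.succ_ne_zero n)) with h1 | h1
      · -- n + 1 = 1
        have hn0 : n = 0 := by omega
        subst hn0
        constructor
        · simpa using hp1
        · rw [hx1]; push_cast; ring
      · have hn : 1 ≤ n := by omega
        have hnk : n ≤ k := by omega
        obtain ⟨hpn, hxn⟩ := ih hn (by omega)
        have hxpos : 0 < x n := by
          rw [hxn]
          have h1 : (1 : ℝ) ≤ (n : ℝ) := by exact_mod_cast hn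
          have h2 : (n : ℝ) ≤ (k : ℝ) := by exact_mod_cast hnk
          nlinarith
        have hs : Real.sign (x n) = 1 := Real.sign_of_pos hxpos
        constructor
        · rw [hp n hn, hs, hpn]; push_cast; ring
        · rw [hx n hn, hs, hxn, hpn]; push_cast; ring
  constructor
  · intro i hi hik
    obtain ⟨_, hxi⟩ := key i hi (by omega)
    have hxpos : 0 < x i := by
      rw [hxi]
      have h1 : (1 : ℝ) ≤ (i : ℝ) := by exact_mod_cast hi
      have h2 : (i : ℝ) ≤ (k : ℝ) := by exact_mod_cast hik
      nlinarith
    exact Real.sign_of_pos hxpos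
  · obtain ⟨_, hxk⟩ := key (k + 1) (by omega) le_rfl
    rw [hxk]; push_cast; ring
end

section
/- Let n be a positive integer, k = 2n, and consider the evolution p(i+1) = p(i) - sgn(x(i)), x(i+1) = x(i) + p(i) - sgn(x(i)) with initial conditions p(1) = x(1) = n/(2n+1). Then the signs alternate: sgn(x(i)) = (-1)^{i+1} for 1 ≤ i ≤ 2n, and x(2n+1) = 0. -/
/-- Starting from `p(1) = x(1) = n/(2n+1)` with `n ≥ 1`, the signs alternate:
`sgn x(i) = (-1)^(i+1)` for `1 ≤ i ≤ 2n`, and `x(2n+1) = 0`. -/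
theorem stmt_19 (n : ℕ) (hn : 0 < n) (p x : ℕ → ℝ)
    (hp1 : p 1 = (n : ℝ) / (2 * n + 1)) (hx1 : x 1 = (n : ℝ) / (2 * n + 1))
    (hp : ∀ i, 1 ≤ i → p (i + 1) = p i - Real.sign (x i))
    (hx : ∀ i, 1 ≤ i → x (i + 1) = x i + p i - Real.sign (x i)) :
    (∀ i, 1 ≤ i → i ≤ 2 * n → Real.sign (x i) = (-1 : ℝ)^(i + 1)) ∧
      x (2 * n + 1) = 0 := by
  have hd : (0:ℝ) < 2 * n + 1 := by positivity
  -- odd-index closed form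
  have key : ∀ j : ℕ, j ≤ n → x (2*j+1) = ((n:ℝ) - j)/(2*n+1) ∧
      p (2*j+1) = (n:ℝ)/(2*n+1) := by
    intro j
    induction j with
    | zero => intro _; simpa using ⟨hx1, hp1⟩
    | succ m ih =>
      intro hm
      obtain ⟨hxo, hpo⟩ := ih (le_of_lt (Nat.lt_of_succ_le hm))
      have hmlt : (m:ℝ) < n := by exact_mod_cast Nat.lt_of_succ_le hm
      have hxpos : 0 < x (2*m+1) := by
        rw [hxo]; apply div_pos _ hd; linarith
      have hs1 : Real.sign (x (2*m+1)) = 1 := Real.sign_of_pos hxpos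
      have hxe : x (2*m+2) = -((m:ℝ)+1)/(2*n+1) := by
        rw [hx (2*m+1) (by omega), hs1, hxo, hpo]
        field_simp; ring
      have hpe : p (2*m+2) = (n:ℝ)/(2*n+1) - 1 := by
        rw [hp (2*m+1) (by omega), hs1, hpo]
      have hxneg : x (2*m+2) < 0 := by
        rw [hxe]
        apply div_neg_of_neg_of_pos _ hd
        linarith
      have hs2 : Real.sign (x (2*m+2)) = -1 := Real.sign_of_neg hxneg
      constructor
      · have : x (2*m+2+1) = x (2*m+2) + p (2*m+2) - Real.sign (x (2*m+2)) :=
          hx (2*m+2) (by omega)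
        rw [show 2*(m+1)+1 = 2*m+2+1 by ring, this, hs2, hxe, hpe]
        push_cast; field_simp; ring
      · have : p (2*m+2+1) = p (2*m+2) - Real.sign (x (2*m+2)) :=
          hp (2*m+2) (by omega)
        rw [show 2*(m+1)+1 = 2*m+2+1 by ring, this, hs2, hpe]
        ring
  -- even-index closed form
  have keyeven : ∀ j : ℕ, 1 ≤ j → j ≤ n → x (2*j) = -(j:ℝ)/(2*n+1) := by
    intro j hj1 hjn
    obtain ⟨m, rfl⟩ := Nat.exists_eq_add_of_le hj1
    obtain ⟨hxo, hpo⟩ := key m (by omega)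
    have hmlt : (m:ℝ) < n := by exact_mod_cast (by omega : m < n)
    have hxpos : 0 < x (2*m+1) := by
      rw [hxo]; apply div_pos _ hd; linarith
    have hs1 : Real.sign (x (2*m+1)) = 1 := Real.sign_of_pos hxpos
    have : x (2*m+1+1) = x (2*m+1) + p (2*m+1) - Real.sign (x (2*m+1)) :=
      hx (2*m+1) (by omega)
    rw [show 2*(1+m) = 2*m+1+1 by ring, this, hs1, hxo, hpo]
    push_cast; field_simp; ring
  constructor
  · intro i hi1 hi2
    rcases Nat.even_or_odd i with ⟨j, hj⟩ | ⟨j, hj⟩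
    · -- even: i = 2j
      have hj1 : 1 ≤ j := by omega
      have hjn : j ≤ n := by omega
      have hxneg : x i < 0 := by
        rw [show i = 2*j by omega, keyeven j hj1 hjn]
        apply div_neg_of_neg_of_pos _ hd
        have : (0:ℝ) < j := by exact_mod_cast hj1
        linarith
      rw [Real.sign_of_neg hxneg, show i + 1 = 2*j+1 by omega,
        pow_succ, pow_mul]
      norm_num
    · -- odd: i = 2j+1
      have hjn : j < n := by omega
      obtain ⟨hxo, _⟩ := key j (le_of_lt hjn)
      have hxpos : 0 < x i := by
        rw [show i = 2*j+1 by omega, hxo]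
        apply div_pos _ hd
        have : (j:ℝ) < n := by exact_mod_cast hjn
        linarith
      rw [Real.sign_of_pos hxpos, show i + 1 = 2*(j+1) by omega, pow_mul]
      norm_num
  · obtain ⟨hxo, _⟩ := key n le_rfl
    rw [show 2*n+1 = 2*n+1 by rfl] at hxo
    rw [hxo]; simp
end
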